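/- Let (m_n) be an unbounded sequence of natural numbers with m_n ≥ 1 for all n. Then the Banach space (⊕_{n∈ℕ} ℓ_1^{m_n})_{ℓ∞} is isomorphic (linearly homeomorphic) to (⊕_{n∈ℕ} ℓ_1^n)_{ℓ∞}. -/

import Mathlib

set_option synthInstance.maxHeartbeats 1000000
set_option maxHeartbeats 1000000

open scoped ENNReal

noncomputable section

namespace Stmt9

variable {I J : Type*}

abbrev Sp {I : Type*} (d : I → ℕ) : Type _ :=
  lp (fun i : I => PiLp 1 (fun _ : Fin (d i) => ℝ)) ⊤

lemma piLp_norm {N : ℕ} (x : PiLp 1 (fun _ : Fin N => ℝ)) : ‖x‖ = ∑ k, |x k| := by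
  rw [PiLp.norm_eq_sum (by norm_num)]
  simp [Real.norm_eq_abs]

variable (d : I → ℕ) (e : J → ℕ)

def rawT (π : (Σ j : J, Fin (e j)) ≃ (Σ i : I, Fin (d i)))
    (x : ∀ i, PiLp 1 (fun _ : Fin (d i) => ℝ)) :
    ∀ j, PiLp 1 (fun _ : Fin (e j) => ℝ) :=
  fun j => WithLp.toLp 1 (fun k => x (π ⟨j, k⟩).1 (π ⟨j, k⟩).2)

lemma rawT_norm_le (π : (Σ j : J, Fin (e j)) ≃ (Σ i : I, Fin (d i)))
    (x : ∀ i, PiLp 1 (fun _ : Fin (d i) => ℝ)) (j : J) {i₁ i₂ : I}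
    (hj : ∀ k : Fin (e j), (π ⟨j, k⟩).1 = i₁ ∨ (π ⟨j, k⟩).1 = i₂) :
    ‖rawT d e π x j‖ ≤ ‖x i₁‖ + ‖x i₂‖ := by
  classical
  rw [piLp_norm, piLp_norm, piLp_norm]
  have key : ∑ k : Fin (e j), |rawT d e π x j k| ≤
      ∑ p ∈ ({i₁, i₂} : Finset I).sigma (fun i => (Finset.univ : Finset (Fin (d i)))),
        |x p.1 p.2| := by
    have hinj : ∀ a ∈ (Finset.univ : Finset (Fin (e j))), ∀ b ∈ Finset.univ,
        π ⟨j, a⟩ = π ⟨j, b⟩ → a = b := by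
      intro a _ b _ hab
      exact eq_of_heq ((Sigma.mk.inj_iff.mp (π.injective hab)).2)
    calc ∑ k : Fin (e j), |rawT d e π x j k|
        = ∑ p ∈ Finset.univ.image (fun k : Fin (e j) => π ⟨j, k⟩), |x p.1 p.2| := by
          rw [Finset.sum_image hinj]
          rfl
      _ ≤ _ := by
          apply Finset.sum_le_sum_of_subset_of_nonneg
          · intro p hp
            simp only [Finset.mem_image, Finset.mem_univ, true_and] at hp
            obtain ⟨k, rfl⟩ := hp
            simp only [Finset.mem_sigma, Finset.mem_univ, and_true, Finset.mem_insert,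
              Finset.mem_singleton]
            exact hj k
          · intros; positivity
  refine key.trans ?_
  rw [Finset.sum_sigma]
  by_cases h : i₁ = i₂
  · subst h
    have hpair : ({i₁, i₁} : Finset I) = {i₁} := by simp
    rw [hpair, Finset.sum_singleton]
    exact le_add_of_nonneg_left (Finset.sum_nonneg fun k _ => abs_nonneg _)
  · rw [Finset.sum_insert (by simp [h]), Finset.sum_singleton]


def BlockBdd (π : (Σ j : J, Fin (e j)) ≃ (Σ i : I, Fin (d i))) : Prop :=
  ∀ j : J, ∃ i₁ i₂ : I, ∀ k : Fin (e j), (π ⟨j, k⟩).1 = i₁ ∨ (π ⟨j, k⟩).1 = i₂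

lemma rawT_memℓp (π : (Σ j : J, Fin (e j)) ≃ (Σ i : I, Fin (d i)))
    (hfwd : BlockBdd d e π) (x : Sp d) :
    Memℓp (rawT d e π (x : ∀ i, PiLp 1 (fun _ : Fin (d i) => ℝ))) ⊤ := by
  apply memℓp_infty
  refine ⟨2 * ‖x‖, ?_⟩
  rintro - ⟨j, rfl⟩
  obtain ⟨i₁, i₂, hj⟩ := hfwd j
  calc ‖rawT d e π (x : ∀ i, PiLp 1 (fun _ : Fin (d i) => ℝ)) j‖
      ≤ ‖(x : ∀ i, PiLp 1 (fun _ : Fin (d i) => ℝ)) i₁‖ +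
        ‖(x : ∀ i, PiLp 1 (fun _ : Fin (d i) => ℝ)) i₂‖ := rawT_norm_le d e π _ j hj
    _ ≤ ‖x‖ + ‖x‖ := add_le_add (lp.norm_apply_le_norm (by simp) x i₁)
        (lp.norm_apply_le_norm (by simp) x i₂)
    _ = 2 * ‖x‖ := by ring

def Tl (π : (Σ j : J, Fin (e j)) ≃ (Σ i : I, Fin (d i))) (hfwd : BlockBdd d e π) :
    Sp d →ₗ[ℝ] Sp e where
  toFun x := ⟨rawT d e π (x : ∀ i, PiLp 1 (fun _ : Fin (d i) => ℝ)), rawT_memℓp d e π hfwd x⟩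
  map_add' x y := by
    apply Subtype.ext
    funext j
    ext k
    show ((x + y) : ∀ i, PiLp 1 (fun _ : Fin (d i) => ℝ)) _ _ = _
    rw [lp.coeFn_add]
    rfl
  map_smul' c x := by
    apply Subtype.ext
    funext j
    ext k
    show ((c • x) : ∀ i, PiLp 1 (fun _ : Fin (d i) => ℝ)) _ _ = _
    rw [lp.coeFn_smul]
    rfl

lemma Tl_norm_le (π : (Σ j : J, Fin (e j)) ≃ (Σ i : I, Fin (d i))) (hfwd : BlockBdd d e π)
    (x : Sp d) : ‖Tl d e π hfwd x‖ ≤ 2 * ‖x‖ := by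
  apply lp.norm_le_of_forall_le (by positivity)
  intro j
  obtain ⟨i₁, i₂, hj⟩ := hfwd j
  calc ‖(Tl d e π hfwd x : ∀ j, PiLp 1 (fun _ : Fin (e j) => ℝ)) j‖
      = ‖rawT d e π (x : ∀ i, PiLp 1 (fun _ : Fin (d i) => ℝ)) j‖ := rfl
    _ ≤ ‖(x : ∀ i, PiLp 1 (fun _ : Fin (d i) => ℝ)) i₁‖ +
        ‖(x : ∀ i, PiLp 1 (fun _ : Fin (d i) => ℝ)) i₂‖ := rawT_norm_le d e π _ j hj
    _ ≤ ‖x‖ + ‖x‖ := add_le_add (lp.norm_apply_le_norm (by simp) x i₁)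
        (lp.norm_apply_le_norm (by simp) x i₂)
    _ = 2 * ‖x‖ := by ring

def Tc (π : (Σ j : J, Fin (e j)) ≃ (Σ i : I, Fin (d i))) (hfwd : BlockBdd d e π) :
    Sp d →L[ℝ] Sp e :=
  LinearMap.mkContinuous (Tl d e π hfwd) 2 (Tl_norm_le d e π hfwd)

theorem master (π : (Σ j : J, Fin (e j)) ≃ (Σ i : I, Fin (d i)))
    (hfwd : BlockBdd d e π) (hbwd : BlockBdd e d π.symm) :
    Nonempty (Sp d ≃L[ℝ] Sp e) := by
  refine ⟨ContinuousLinearEquiv.equivOfInverse (Tc d e π hfwd) (Tc e d π.symm hbwd) ?_ ?_⟩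
  · intro x
    apply Subtype.ext
    funext i
    ext k
    show (x : ∀ i, PiLp 1 (fun _ : Fin (d i) => ℝ)) (π (π.symm ⟨i, k⟩)).1
        (π (π.symm ⟨i, k⟩)).2 = _
    rw [Equiv.apply_symm_apply]
  · intro y
    apply Subtype.ext
    funext j
    ext k
    show (y : ∀ j, PiLp 1 (fun _ : Fin (e j) => ℝ)) (π.symm (π ⟨j, k⟩)).1
        (π.symm (π ⟨j, k⟩)).2 = _
    rw [Equiv.symm_apply_apply]


/-! ### Combinatorics -/

variable (m : ℕ → ℕ) (hm : ∀ C : ℕ, ∃ n, C < m n)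
include hm

lemma infinite_ge (s : ℕ) : {n : ℕ | s ≤ m n}.Infinite := by
  apply Set.infinite_of_not_bddAbove
  rintro ⟨N, hN⟩
  obtain ⟨n, hn⟩ := hm (max s ((Finset.range (N + 1)).sup m))
  have hs : s ≤ m n := le_of_lt (lt_of_le_of_lt (le_max_left _ _) hn)
  have h2 : n ≤ N := hN hs
  have h3 : m n ≤ (Finset.range (N + 1)).sup m :=
    Finset.le_sup (Finset.mem_range.mpr (by omega))
  have h4 := le_max_right s ((Finset.range (N + 1)).sup m)
  omega

lemma exists_fresh (s : ℕ) (l : List ℕ) : ∃ n, s ≤ m n ∧ n ∉ l := by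
  obtain ⟨n, hn⟩ := ((infinite_ge m hm s).diff l.toFinset.finite_toSet).nonempty
  exact ⟨n, hn.1, by simpa using hn.2⟩

def picks : ℕ → List ℕ
  | 0 => []
  | r + 1 => Nat.find (exists_fresh m hm (Nat.unpair r).1 (picks r)) :: picks r

def g (r : ℕ) : ℕ := Nat.find (exists_fresh m hm (Nat.unpair r).1 (picks m hm r))

lemma picks_succ (r : ℕ) : picks m hm (r + 1) = g m hm r :: picks m hm r := rfl

lemma g_spec (r : ℕ) : (Nat.unpair r).1 ≤ m (g m hm r) ∧ g m hm r ∉ picks m hm r :=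
  Nat.find_spec (exists_fresh m hm (Nat.unpair r).1 (picks m hm r))

lemma mem_picks_of_lt {r r' : ℕ} (h : r < r') : g m hm r ∈ picks m hm r' := by
  induction r' with
  | zero => omega
  | succ r'' ih =>
    rw [picks_succ]
    rcases Nat.lt_succ_iff_lt_or_eq.mp h with h' | h'
    · exact List.mem_cons_of_mem _ (ih h')
    · subst h'; exact List.mem_cons_self

lemma g_inj : Function.Injective (g m hm) := by
  intro r r' h
  by_contra hne
  wlog hlt : r < r' generalizing r r'
  · exact this h.symm (Ne.symm hne) (by omega)
  have h1 := mem_picks_of_lt m hm hlt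
  rw [h] at h1
  exact (g_spec m hm r').2 h1

open scoped Classical in
def A (n : ℕ) : ℕ :=
  if h : ∃ r, g m hm r = n then
    if (Nat.unpair h.choose).1 = 0 then m n else (Nat.unpair h.choose).1
  else m n

lemma A_le (n : ℕ) : A m hm n ≤ m n := by
  unfold A
  split_ifs with h h0
  · exact le_rfl
  · have h1 := (g_spec m hm h.choose).1
    rw [h.choose_spec] at h1
    exact h1
  · exact le_rfl

def B (n : ℕ) : ℕ := m n - A m hm n

lemma A_add_B (n : ℕ) : A m hm n + B m hm n = m n := by
  have := A_le m hm n; unfold B; omega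

def u : ℕ ⊕ ℕ → ℕ := Sum.elim (A m hm) (B m hm)

lemma choose_eq {n : ℕ} (h : ∃ r, g m hm r = n) (r : ℕ) (hr : g m hm r = n) :
    h.choose = r :=
  g_inj m hm (by rw [h.choose_spec, hr])

lemma A_g (r : ℕ) :
    A m hm (g m hm r) =
      if (Nat.unpair r).1 = 0 then m (g m hm r) else (Nat.unpair r).1 := by
  have h : ∃ r', g m hm r' = g m hm r := ⟨r, rfl⟩
  unfold A
  rw [dif_pos h, choose_eq m hm h r rfl]

lemma fiber_infinite (s : ℕ) : {j : ℕ ⊕ ℕ | u m hm j = s}.Infinite := by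
  rcases Nat.eq_zero_or_pos s with rfl | hs
  · apply Set.infinite_of_injective_forall_mem
      (f := fun i : ℕ => (Sum.inr (g m hm (Nat.pair 0 i)) : ℕ ⊕ ℕ))
    · intro i j hij
      have := g_inj m hm (Sum.inr.inj hij)
      exact (Nat.pair_eq_pair.mp this).2
    · intro i
      have hA : A m hm (g m hm (Nat.pair 0 i)) = m (g m hm (Nat.pair 0 i)) := by
        rw [A_g]; simp [Nat.unpair_pair]
      show B m hm (g m hm (Nat.pair 0 i)) = 0
      unfold B
      omega
  · apply Set.infinite_of_injective_forall_mem
      (f := fun i : ℕ => (Sum.inl (g m hm (Nat.pair s i)) : ℕ ⊕ ℕ))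
    · intro i j hij
      have := g_inj m hm (Sum.inl.inj hij)
      exact (Nat.pair_eq_pair.mp this).2
    · intro i
      show A m hm (g m hm (Nat.pair s i)) = s
      rw [A_g]
      simp only [Nat.unpair_pair]
      rw [if_neg (by omega)]


def e₀ : (Σ j : ℕ ⊕ ℕ, Fin (u m hm j)) ≃ (Σ n : ℕ, Fin (A m hm n + B m hm n)) where
  toFun p :=
    match p with
    | ⟨Sum.inl n, k⟩ => ⟨n, finSumFinEquiv (Sum.inl k)⟩
    | ⟨Sum.inr n, k⟩ => ⟨n, finSumFinEquiv (Sum.inr k)⟩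
  invFun p :=
    match finSumFinEquiv.symm p.2 with
    | Sum.inl k => ⟨Sum.inl p.1, k⟩
    | Sum.inr k => ⟨Sum.inr p.1, k⟩
  left_inv := by
    rintro ⟨(n | n), k⟩ <;> simp
  right_inv := by
    rintro ⟨n, k⟩
    rcases h : finSumFinEquiv.symm k with k' | k' <;>
    · simp only [h]
      rw [← h, Equiv.apply_symm_apply]

lemma e₀_symm_eq (n : ℕ) (k : Fin (A m hm n + B m hm n)) :
    (e₀ m hm).symm ⟨n, k⟩ =
      (match finSumFinEquiv.symm k with
      | Sum.inl k' => ⟨Sum.inl n, k'⟩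
      | Sum.inr k' => ⟨Sum.inr n, k'⟩ : Σ j : ℕ ⊕ ℕ, Fin (u m hm j)) := by
  apply (e₀ m hm).injective
  rw [Equiv.apply_symm_apply]
  rcases h : finSumFinEquiv.symm k with k' | k'
  · simp only [h]
    show (⟨n, k⟩ : Σ n : ℕ, Fin (A m hm n + B m hm n)) = ⟨n, finSumFinEquiv (Sum.inl k')⟩
    rw [← h, Equiv.apply_symm_apply]
  · simp only [h]
    show (⟨n, k⟩ : Σ n : ℕ, Fin (A m hm n + B m hm n)) = ⟨n, finSumFinEquiv (Sum.inr k')⟩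
    rw [← h, Equiv.apply_symm_apply]

def splitEquiv : (Σ j : ℕ ⊕ ℕ, Fin (u m hm j)) ≃ (Σ n : ℕ, Fin (m n)) :=
  (e₀ m hm).trans (Equiv.sigmaCongrRight fun n => finCongr (A_add_B m hm n))

lemma split_fwd : BlockBdd m (u m hm) (splitEquiv m hm) := by
  rintro (n | n)
  · exact ⟨n, n, fun k => Or.inl rfl⟩
  · exact ⟨n, n, fun k => Or.inl rfl⟩

lemma split_bwd : BlockBdd (u m hm) m (splitEquiv m hm).symm := by
  intro n
  refine ⟨Sum.inl n, Sum.inr n, fun k => ?_⟩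
  have h0 : (splitEquiv m hm).symm ⟨n, k⟩ =
      (e₀ m hm).symm ⟨n, (finCongr (A_add_B m hm n)).symm k⟩ := rfl
  rcases h : finSumFinEquiv.symm ((finCongr (A_add_B m hm n)).symm k) with k' | k'
  · left; rw [h0, e₀_symm_eq, h]
  · right; rw [h0, e₀_symm_eq, h]

variable (m' : ℕ → ℕ) (hm' : ∀ C : ℕ, ∃ n, C < m' n)
include hm'

lemma nonempty_fiberEquiv (s : ℕ) :
    Nonempty ({j : ℕ ⊕ ℕ // u m hm j = s} ≃ {j : ℕ ⊕ ℕ // u m' hm' j = s}) := by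
  have h1 : Infinite {j : ℕ ⊕ ℕ // u m hm j = s} := (fiber_infinite m hm s).to_subtype
  have h2 : Infinite {j : ℕ ⊕ ℕ // u m' hm' j = s} := (fiber_infinite m' hm' s).to_subtype
  obtain ⟨d1⟩ := nonempty_denumerable {j : ℕ ⊕ ℕ // u m hm j = s}
  obtain ⟨d2⟩ := nonempty_denumerable {j : ℕ ⊕ ℕ // u m' hm' j = s}
  exact ⟨(@Denumerable.eqv _ d1).trans (@Denumerable.eqv _ d2).symm⟩

def φ : ℕ ⊕ ℕ ≃ ℕ ⊕ ℕ :=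
  Equiv.ofFiberEquiv (f := u m hm) (g := u m' hm')
    (fun s => Classical.choice (nonempty_fiberEquiv m hm m' hm' s))

lemma φ_map (j : ℕ ⊕ ℕ) : u m' hm' (φ m hm m' hm' j) = u m hm j :=
  Equiv.ofFiberEquiv_map _ _

lemma φ_symm_map (j : ℕ ⊕ ℕ) : u m hm ((φ m hm m' hm').symm j) = u m' hm' j := by
  conv_rhs => rw [← Equiv.apply_symm_apply (φ m hm m' hm') j, φ_map]

def midEquiv : (Σ j : ℕ ⊕ ℕ, Fin (u m' hm' j)) ≃ (Σ j : ℕ ⊕ ℕ, Fin (u m hm j)) where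
  toFun p := ⟨(φ m hm m' hm').symm p.1, finCongr (φ_symm_map m hm m' hm' p.1).symm p.2⟩
  invFun p := ⟨φ m hm m' hm' p.1, finCongr (φ_map m hm m' hm' p.1).symm p.2⟩
  left_inv p := by
    rcases p with ⟨j, k⟩
    refine Sigma.ext (by simp) ?_
    rw [Fin.heq_ext_iff (by simp)]
    simp
  right_inv p := by
    rcases p with ⟨j, k⟩
    refine Sigma.ext (by simp) ?_
    rw [Fin.heq_ext_iff (by simp)]
    simp

lemma mid_fwd : BlockBdd (u m hm) (u m' hm') (midEquiv m hm m' hm') := fun j =>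
  ⟨(φ m hm m' hm').symm j, (φ m hm m' hm').symm j, fun _ => Or.inl rfl⟩

lemma mid_bwd : BlockBdd (u m' hm') (u m hm) (midEquiv m hm m' hm').symm := fun j =>
  ⟨φ m hm m' hm' j, φ m hm m' hm' j, fun _ => Or.inl rfl⟩

end Stmt9

/-- Let `(m_n)` be an unbounded sequence of natural numbers with `m_n ≥ 1` for all `n`.
Then `(⊕_{n∈ℕ} ℓ_1^{m_n})_{ℓ∞}` is isomorphic (linearly homeomorphic) to
`(⊕_{n∈ℕ} ℓ_1^n)_{ℓ∞}`. -/
theorem stmt_9 (m : ℕ → ℕ) (hm1 : ∀ n, 1 ≤ m n) (hm : ∀ C : ℕ, ∃ n, C < m n) :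
    Nonempty
      ((lp (fun n : ℕ => PiLp 1 (fun _ : Fin (m n) => ℝ)) ⊤) ≃L[ℝ]
       (lp (fun n : ℕ => PiLp 1 (fun _ : Fin (n + 1) => ℝ)) ⊤)) := by
  classical
  set m' : ℕ → ℕ := fun n => n + 1 with hm'def
  have hm' : ∀ C : ℕ, ∃ n, C < m' n := fun C => ⟨C, Nat.lt_succ_self C⟩
  obtain ⟨F₁⟩ := Stmt9.master m (Stmt9.u m hm) (Stmt9.splitEquiv m hm)
    (Stmt9.split_fwd m hm) (Stmt9.split_bwd m hm)
  obtain ⟨F₂⟩ := Stmt9.master m' (Stmt9.u m' hm') (Stmt9.splitEquiv m' hm')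
    (Stmt9.split_fwd m' hm') (Stmt9.split_bwd m' hm')
  obtain ⟨F₃⟩ := Stmt9.master (Stmt9.u m hm) (Stmt9.u m' hm')
    (Stmt9.midEquiv m hm m' hm') (Stmt9.mid_fwd m hm m' hm') (Stmt9.mid_bwd m hm m' hm')
  exact ⟨F₁.trans (F₃.trans F₂.symm)⟩


end
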